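/- Let ((Δ_i)_{0≤i≤n}, (ψ_i)_{0≤i≤n}) be a deformation of order n of a Coder pair (C, ψ_C). Define Ob_C = Σ_{i+j=n+1, i,j>0} ((Δ_i ⊗ Id_C) ∘ Δ_j − (Id_C ⊗ Δ_i) ∘ Δ_j) ∈ Hom_k(C, C⊗C⊗C) and Ob_ψ = Σ_{i+j=n+1, i,j>0} (Δ_i ∘ ψ_j − (Id_C ⊗ ψ_i) ∘ Δ_j − (ψ_i ⊗ Id_C) ∘ Δ_j) ∈ Hom_k(C, C⊗C). Then the 3-cochain (Ob_C, Ob_ψ) is a 3-cocycle of the Coder-pair complex with coefficients in the coadjoint bicomodule: δ_c(Ob_C) = 0 and δ_c(Ob_ψ) − ω(Ob_C) = 0. -/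

import Mathlib

open TensorProduct LinearMap

variable {k C : Type} [Field k] [AddCommGroup C] [Module k C]

/-- `δ_c(g) = (Id_C ⊗ g) ∘ Δ − Δ ∘ g + (g ⊗ Id_C) ∘ Δ` for `g ∈ Hom(C, C)`
(coadjoint coefficients). -/
noncomputable def delta1 (Δ : C →ₗ[k] C ⊗[k] C) (g : C →ₗ[k] C) : C →ₗ[k] C ⊗[k] C :=
  LinearMap.lTensor C g ∘ₗ Δ - Δ ∘ₗ g + LinearMap.rTensor C g ∘ₗ Δ

/-- `δ_c(f) = (Id_C ⊗ f) ∘ Δ − (Δ ⊗ Id_C) ∘ f + (Id_C ⊗ Δ) ∘ f − (f ⊗ Id_C) ∘ Δ`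
for `f ∈ Hom(C, C ⊗ C)` (coadjoint coefficients). -/
noncomputable def delta2 (Δ : C →ₗ[k] C ⊗[k] C) (f : C →ₗ[k] C ⊗[k] C) :
    C →ₗ[k] C ⊗[k] (C ⊗[k] C) :=
  LinearMap.lTensor C f ∘ₗ Δ
    - (TensorProduct.assoc k C C C).toLinearMap ∘ₗ LinearMap.rTensor C Δ ∘ₗ f
    + LinearMap.lTensor C Δ ∘ₗ f
    - (TensorProduct.assoc k C C C).toLinearMap ∘ₗ LinearMap.rTensor C f ∘ₗ Δ

/-- `ω(g) = ψ_C ∘ g − g ∘ ψ_C` for `g ∈ Hom(C, C)`. -/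
noncomputable def omega1 (ψC : C →ₗ[k] C) (g : C →ₗ[k] C) : C →ₗ[k] C :=
  ψC ∘ₗ g - g ∘ₗ ψC

/-- `ω(f) = (ψ_C ⊗ Id_C) ∘ f + (Id_C ⊗ ψ_C) ∘ f − f ∘ ψ_C` for `f ∈ Hom(C, C ⊗ C)`. -/
noncomputable def omega2 (ψC : C →ₗ[k] C) (f : C →ₗ[k] C ⊗[k] C) : C →ₗ[k] C ⊗[k] C :=
  LinearMap.rTensor C ψC ∘ₗ f + LinearMap.lTensor C ψC ∘ₗ f - f ∘ₗ ψC

/-- A 1-parameter formal deformation `(Δ_t = Σ Δ_i t^i, ψ_t = Σ ψ_i t^i)` of a Coder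
pair `(C, ψ_C)`: `Δ_0 = Δ`, `ψ_0 = ψ_C`, and for every `k ≥ 0`,
`Σ_{i+j=k} ((Id_C ⊗ Δ_i) ∘ Δ_j − (Δ_i ⊗ Id_C) ∘ Δ_j) = 0` and
`Σ_{i+j=k} (Δ_i ∘ ψ_j − (ψ_i ⊗ Id_C) ∘ Δ_j − (Id_C ⊗ ψ_i) ∘ Δ_j) = 0`. -/
noncomputable def IsFormalDeformation (Δ : C →ₗ[k] C ⊗[k] C) (ψC : C →ₗ[k] C)
    (Δs : ℕ → (C →ₗ[k] C ⊗[k] C)) (ψs : ℕ → (C →ₗ[k] C)) : Prop :=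
  Δs 0 = Δ ∧ ψs 0 = ψC ∧
  (∀ n : ℕ, ∑ p ∈ Finset.HasAntidiagonal.antidiagonal n, LinearMap.lTensor C (Δs p.1) ∘ₗ Δs p.2
      = ∑ p ∈ Finset.HasAntidiagonal.antidiagonal n,
          (TensorProduct.assoc k C C C).toLinearMap ∘ₗ LinearMap.rTensor C (Δs p.1) ∘ₗ Δs p.2) ∧
  (∀ n : ℕ, ∑ p ∈ Finset.HasAntidiagonal.antidiagonal n, Δs p.1 ∘ₗ ψs p.2
      = ∑ p ∈ Finset.HasAntidiagonal.antidiagonal n,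
          (LinearMap.rTensor C (ψs p.1) ∘ₗ Δs p.2 + LinearMap.lTensor C (ψs p.1) ∘ₗ Δs p.2))

/-- The additive group of 4-cochains `Hom(C, C^{⊗4})`.  (Registered explicitly since
instance search struggles with the deeply nested tensor product.) -/
noncomputable instance instAddCommGroupHom4 :
    AddCommGroup (C →ₗ[k] C ⊗[k] (C ⊗[k] (C ⊗[k] C))) :=
  @LinearMap.addCommGroup k k C (C ⊗[k] (C ⊗[k] (C ⊗[k] C))) _ _ _
    (TensorProduct.addCommGroup) _ _ (RingHom.id k)

/-- `δ_c(F)` for a 3-cochain `F ∈ Hom(C, C ⊗ C ⊗ C)` (coadjoint coefficients):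
`δ_c(F) = (Id ⊗ F) ∘ Δ − (Δ ⊗ Id ⊗ Id) ∘ F + (Id ⊗ Δ ⊗ Id) ∘ F − (Id ⊗ Id ⊗ Δ) ∘ F
          + (F ⊗ Id) ∘ Δ`. -/
noncomputable def delta3 (Δ : C →ₗ[k] C ⊗[k] C) (F : C →ₗ[k] C ⊗[k] (C ⊗[k] C)) :
    C →ₗ[k] C ⊗[k] (C ⊗[k] (C ⊗[k] C)) :=
  LinearMap.lTensor C F ∘ₗ Δ
    - (TensorProduct.assoc k C C (C ⊗[k] C)).toLinearMap
        ∘ₗ LinearMap.rTensor (C ⊗[k] C) Δ ∘ₗ F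
    + LinearMap.lTensor C
        ((TensorProduct.assoc k C C C).toLinearMap ∘ₗ LinearMap.rTensor C Δ) ∘ₗ F
    - LinearMap.lTensor C (LinearMap.lTensor C Δ) ∘ₗ F
    + (LinearMap.lTensor C (TensorProduct.assoc k C C C).toLinearMap
        ∘ₗ (TensorProduct.assoc k C (C ⊗[k] C) C).toLinearMap)
        ∘ₗ LinearMap.rTensor C F ∘ₗ Δ

/-- `ω(F) = (ψ ⊗ Id ⊗ Id) ∘ F + (Id ⊗ ψ ⊗ Id) ∘ F + (Id ⊗ Id ⊗ ψ) ∘ F − F ∘ ψ` for a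
3-cochain `F ∈ Hom(C, C ⊗ C ⊗ C)`. -/
noncomputable def omega3 (ψC : C →ₗ[k] C) (F : C →ₗ[k] C ⊗[k] (C ⊗[k] C)) :
    C →ₗ[k] C ⊗[k] (C ⊗[k] C) :=
  LinearMap.rTensor (C ⊗[k] C) ψC ∘ₗ F
    + LinearMap.lTensor C (LinearMap.rTensor C ψC) ∘ₗ F
    + LinearMap.lTensor C (LinearMap.lTensor C ψC) ∘ₗ F
    - F ∘ₗ ψC

/-- A deformation of order `n` of a Coder pair `(C, ψ_C)`: `Δ_0 = Δ`, `ψ_0 = ψ_C`, and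
the deformation equations hold modulo `t^{n+1}`, i.e. for every `0 ≤ m ≤ n`. -/
noncomputable def IsDeformationOfOrder (n : ℕ) (Δ : C →ₗ[k] C ⊗[k] C) (ψC : C →ₗ[k] C)
    (Δs : ℕ → (C →ₗ[k] C ⊗[k] C)) (ψs : ℕ → (C →ₗ[k] C)) : Prop :=
  Δs 0 = Δ ∧ ψs 0 = ψC ∧
  (∀ m : ℕ, m ≤ n →
    ∑ p ∈ Finset.HasAntidiagonal.antidiagonal m, LinearMap.lTensor C (Δs p.1) ∘ₗ Δs p.2
      = ∑ p ∈ Finset.HasAntidiagonal.antidiagonal m,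
          (TensorProduct.assoc k C C C).toLinearMap ∘ₗ LinearMap.rTensor C (Δs p.1) ∘ₗ Δs p.2) ∧
  (∀ m : ℕ, m ≤ n →
    ∑ p ∈ Finset.HasAntidiagonal.antidiagonal m, Δs p.1 ∘ₗ ψs p.2
      = ∑ p ∈ Finset.HasAntidiagonal.antidiagonal m,
          (LinearMap.rTensor C (ψs p.1) ∘ₗ Δs p.2 + LinearMap.lTensor C (ψs p.1) ∘ₗ Δs p.2))

/-- The first obstruction component
`Ob_C = Σ_{i+j=n+1, i,j>0} ((Δ_i ⊗ Id_C) ∘ Δ_j − (Id_C ⊗ Δ_i) ∘ Δ_j)`. -/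
noncomputable def obC (n : ℕ) (Δs : ℕ → (C →ₗ[k] C ⊗[k] C)) :
    C →ₗ[k] C ⊗[k] (C ⊗[k] C) :=
  ∑ p ∈ (Finset.HasAntidiagonal.antidiagonal (n + 1)).filter (fun p => 0 < p.1 ∧ 0 < p.2),
    ((TensorProduct.assoc k C C C).toLinearMap ∘ₗ LinearMap.rTensor C (Δs p.1) ∘ₗ Δs p.2
      - LinearMap.lTensor C (Δs p.1) ∘ₗ Δs p.2)

/-- The second obstruction component
`Ob_ψ = Σ_{i+j=n+1, i,j>0} (Δ_i ∘ ψ_j − (Id_C ⊗ ψ_i) ∘ Δ_j − (ψ_i ⊗ Id_C) ∘ Δ_j)`. -/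
noncomputable def obPsi (n : ℕ) (Δs : ℕ → (C →ₗ[k] C ⊗[k] C)) (ψs : ℕ → (C →ₗ[k] C)) :
    C →ₗ[k] C ⊗[k] C :=
  ∑ p ∈ (Finset.HasAntidiagonal.antidiagonal (n + 1)).filter (fun p => 0 < p.1 ∧ 0 < p.2),
    (Δs p.1 ∘ₗ ψs p.2 - LinearMap.lTensor C (ψs p.1) ∘ₗ Δs p.2
      - LinearMap.rTensor C (ψs p.1) ∘ₗ Δs p.2)


/-! ### Auxiliary material for the obstruction theorem -/

section ObstructionAux

namespace ObstrSum
variable {M : Type*} [AddCommMonoid M]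

lemma sq (m : ℕ) (f : ℕ → ℕ → ℕ → M) :
    ∑ p ∈ Finset.HasAntidiagonal.antidiagonal m, ∑ q ∈ Finset.HasAntidiagonal.antidiagonal p.2, f p.1 q.1 q.2
      = ∑ i ∈ Finset.range (m + 1), ∑ j ∈ Finset.range (m + 1),
          if i + j ≤ m then f i j (m - i - j) else 0 := by
  rw [Finset.Nat.sum_antidiagonal_eq_sum_range_succ
    (fun a b => ∑ q ∈ Finset.HasAntidiagonal.antidiagonal b, f a q.1 q.2) m]
  refine Finset.sum_congr rfl fun i hi => ?_
  rw [Finset.mem_range] at hi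
  rw [Finset.Nat.sum_antidiagonal_eq_sum_range_succ (fun a b => f i a b) (m - i)]
  rw [show (m - i).succ = m - i + 1 from rfl]
  rw [← Finset.sum_subset (Finset.range_subset_range.2 (by omega : m - i + 1 ≤ m + 1))]
  · refine Finset.sum_congr rfl fun j hj => ?_
    rw [Finset.mem_range] at hj
    rw [if_pos (by omega)]
  · intro j hj hj'
    rw [Finset.mem_range] at hj hj'
    rw [if_neg (by omega)]

lemma swap12 (m : ℕ) (f : ℕ → ℕ → ℕ → M) :
    ∑ p ∈ Finset.HasAntidiagonal.antidiagonal m, ∑ q ∈ Finset.HasAntidiagonal.antidiagonal p.2, f p.1 q.1 q.2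
      = ∑ p ∈ Finset.HasAntidiagonal.antidiagonal m, ∑ q ∈ Finset.HasAntidiagonal.antidiagonal p.2, f q.1 p.1 q.2 := by
  rw [sq m f, sq m (fun a b c => f b a c), Finset.sum_comm]
  refine Finset.sum_congr rfl fun i _ => Finset.sum_congr rfl fun j _ => ?_
  simp only [Nat.sub_sub]
  rw [Nat.add_comm j i]

lemma swap23 (m : ℕ) (f : ℕ → ℕ → ℕ → M) :
    ∑ p ∈ Finset.HasAntidiagonal.antidiagonal m, ∑ q ∈ Finset.HasAntidiagonal.antidiagonal p.2, f p.1 q.1 q.2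
      = ∑ p ∈ Finset.HasAntidiagonal.antidiagonal m, ∑ q ∈ Finset.HasAntidiagonal.antidiagonal p.2, f p.1 q.2 q.1 := by
  refine Finset.sum_congr rfl fun p _ => ?_
  exact (Finset.Nat.sum_antidiagonal_swap (f := fun q => f p.1 q.1 q.2)).symm

/-- `S3 f = S3 (fun a b c => f b c a)` -/
lemma rotL (m : ℕ) (f : ℕ → ℕ → ℕ → M) :
    ∑ p ∈ Finset.HasAntidiagonal.antidiagonal m, ∑ q ∈ Finset.HasAntidiagonal.antidiagonal p.2, f p.1 q.1 q.2
      = ∑ p ∈ Finset.HasAntidiagonal.antidiagonal m, ∑ q ∈ Finset.HasAntidiagonal.antidiagonal p.2, f q.1 q.2 p.1 := by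
  rw [swap23 m f, swap12 m (fun a b c => f a c b)]

/-- `S3 f = S3 (fun a b c => f c a b)` -/
lemma rotR (m : ℕ) (f : ℕ → ℕ → ℕ → M) :
    ∑ p ∈ Finset.HasAntidiagonal.antidiagonal m, ∑ q ∈ Finset.HasAntidiagonal.antidiagonal p.2, f p.1 q.1 q.2
      = ∑ p ∈ Finset.HasAntidiagonal.antidiagonal m, ∑ q ∈ Finset.HasAntidiagonal.antidiagonal p.2, f q.2 p.1 q.1 := by
  rw [swap12 m f, swap23 m (fun a b c => f b a c)]

lemma antidiagonal_swap' (m : ℕ) (F : ℕ × ℕ → M) :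
    ∑ q ∈ Finset.HasAntidiagonal.antidiagonal m, F q = ∑ q ∈ Finset.HasAntidiagonal.antidiagonal m, F q.swap :=
  (Finset.Nat.sum_antidiagonal_swap (f := F)).symm

end ObstrSum

variable {k C : Type} [Field k] [AddCommGroup C] [Module k C]

noncomputable instance instACG1 :
    AddCommGroup (C ⊗[k] C →ₗ[k] C ⊗[k] (C ⊗[k] (C ⊗[k] C))) :=
  @LinearMap.addCommGroup k k (C ⊗[k] C) (C ⊗[k] (C ⊗[k] (C ⊗[k] C))) _ _ _
    (TensorProduct.addCommGroup) _ _ (RingHom.id k)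

noncomputable instance instACG3 :
    AddCommGroup (C →ₗ[k] C ⊗[k] (C ⊗[k] C)) :=
  @LinearMap.addCommGroup k k C (C ⊗[k] (C ⊗[k] C)) _ _ _
    (TensorProduct.addCommGroup) _ _ (RingHom.id k)

noncomputable instance instACG2 :
    AddCommGroup (C ⊗[k] C →ₗ[k] (C ⊗[k] (C ⊗[k] C)) ⊗[k] C) :=
  @LinearMap.addCommGroup k k (C ⊗[k] C) ((C ⊗[k] (C ⊗[k] C)) ⊗[k] C) _ _ _
    (TensorProduct.addCommGroup) _ _ (RingHom.id k)

lemma obstrNat1 (e : C →ₗ[k] C ⊗[k] C) :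
    (TensorProduct.assoc k (C ⊗[k] C) C C).toLinearMap ∘ₗ rTensor C (rTensor C e)
      = rTensor (C ⊗[k] C) e ∘ₗ (TensorProduct.assoc k C C C).toLinearMap := by
  apply TensorProduct.ext_threefold; intro x y z; simp

lemma obstrNat2 (e : C →ₗ[k] C ⊗[k] C) :
    (TensorProduct.assoc k C (C ⊗[k] C) C).toLinearMap ∘ₗ rTensor C (lTensor C e)
      = lTensor C (rTensor C e) ∘ₗ (TensorProduct.assoc k C C C).toLinearMap := by
  apply TensorProduct.ext_threefold; intro x y z; simp

lemma obstrNat3 (e : C →ₗ[k] C ⊗[k] C) :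
    (TensorProduct.assoc k C C (C ⊗[k] C)).toLinearMap ∘ₗ lTensor (C ⊗[k] C) e
      = lTensor C (lTensor C e) ∘ₗ (TensorProduct.assoc k C C C).toLinearMap := by
  apply TensorProduct.ext_threefold; intro x y z; simp

lemma obstrNat1' (ψ : C →ₗ[k] C) :
    (TensorProduct.assoc k C C C).toLinearMap ∘ₗ rTensor C (rTensor C ψ)
      = rTensor (C ⊗[k] C) ψ ∘ₗ (TensorProduct.assoc k C C C).toLinearMap := by
  apply TensorProduct.ext_threefold; intro x y z; simp

lemma obstrNat2' (ψ : C →ₗ[k] C) :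
    (TensorProduct.assoc k C C C).toLinearMap ∘ₗ rTensor C (lTensor C ψ)
      = lTensor C (rTensor C ψ) ∘ₗ (TensorProduct.assoc k C C C).toLinearMap := by
  apply TensorProduct.ext_threefold; intro x y z; simp

lemma obstrNat3' (ψ : C →ₗ[k] C) :
    (TensorProduct.assoc k C C C).toLinearMap ∘ₗ lTensor (C ⊗[k] C) ψ
      = lTensor C (lTensor C ψ) ∘ₗ (TensorProduct.assoc k C C C).toLinearMap := by
  apply TensorProduct.ext_threefold; intro x y z; simp

lemma obstrPent :
    (TensorProduct.assoc k C C (C ⊗[k] C)).toLinearMap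
        ∘ₗ (TensorProduct.assoc k (C ⊗[k] C) C C).toLinearMap
      = lTensor C (TensorProduct.assoc k C C C).toLinearMap
        ∘ₗ (TensorProduct.assoc k C (C ⊗[k] C) C).toLinearMap
        ∘ₗ rTensor C (TensorProduct.assoc k C C C).toLinearMap := by
  apply TensorProduct.ext_fourfold; intro w x y z; simp

/-- `Q f g`: the obstruction summand. -/
noncomputable def Qc (f g : C →ₗ[k] C ⊗[k] C) : C →ₗ[k] C ⊗[k] (C ⊗[k] C) :=
  (TensorProduct.assoc k C C C).toLinearMap ∘ₗ rTensor C f ∘ₗ g - lTensor C f ∘ₗ g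

/-- `B f ψ`: the second obstruction summand. -/
noncomputable def Bc (f : C →ₗ[k] C ⊗[k] C) (ψ : C →ₗ[k] C) : C →ₗ[k] C ⊗[k] C :=
  f ∘ₗ ψ - rTensor C ψ ∘ₗ f - lTensor C ψ ∘ₗ f

noncomputable def N1 (e f g : C →ₗ[k] C ⊗[k] C) : C →ₗ[k] C ⊗[k] (C ⊗[k] (C ⊗[k] C)) :=
  lTensor C ((TensorProduct.assoc k C C C).toLinearMap ∘ₗ rTensor C f ∘ₗ g) ∘ₗ e

noncomputable def N2 (e f g : C →ₗ[k] C ⊗[k] C) : C →ₗ[k] C ⊗[k] (C ⊗[k] (C ⊗[k] C)) :=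
  (TensorProduct.assoc k C C (C ⊗[k] C)).toLinearMap ∘ₗ rTensor (C ⊗[k] C) e
    ∘ₗ (TensorProduct.assoc k C C C).toLinearMap ∘ₗ rTensor C f ∘ₗ g

noncomputable def N3 (e f g : C →ₗ[k] C ⊗[k] C) : C →ₗ[k] C ⊗[k] (C ⊗[k] (C ⊗[k] C)) :=
  lTensor C ((TensorProduct.assoc k C C C).toLinearMap ∘ₗ rTensor C e)
    ∘ₗ (TensorProduct.assoc k C C C).toLinearMap ∘ₗ rTensor C f ∘ₗ g

noncomputable def N4 (e f g : C →ₗ[k] C ⊗[k] C) : C →ₗ[k] C ⊗[k] (C ⊗[k] (C ⊗[k] C)) :=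
  lTensor C (lTensor C e)
    ∘ₗ (TensorProduct.assoc k C C C).toLinearMap ∘ₗ rTensor C f ∘ₗ g

noncomputable def N6 (e f g : C →ₗ[k] C ⊗[k] C) : C →ₗ[k] C ⊗[k] (C ⊗[k] (C ⊗[k] C)) :=
  lTensor C (lTensor C f ∘ₗ g) ∘ₗ e

noncomputable def M1 (a b : C →ₗ[k] C ⊗[k] C) (ψ : C →ₗ[k] C) : C →ₗ[k] C ⊗[k] (C ⊗[k] C) :=
  lTensor C (b ∘ₗ ψ) ∘ₗ a
noncomputable def M4 (a b : C →ₗ[k] C ⊗[k] C) (ψ : C →ₗ[k] C) : C →ₗ[k] C ⊗[k] (C ⊗[k] C) :=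
  (TensorProduct.assoc k C C C).toLinearMap ∘ₗ rTensor C (b ∘ₗ ψ) ∘ₗ a
noncomputable def M5 (a b : C →ₗ[k] C ⊗[k] C) (ψ : C →ₗ[k] C) : C →ₗ[k] C ⊗[k] (C ⊗[k] C) :=
  lTensor C (rTensor C ψ ∘ₗ b) ∘ₗ a
noncomputable def M8 (a b : C →ₗ[k] C ⊗[k] C) (ψ : C →ₗ[k] C) : C →ₗ[k] C ⊗[k] (C ⊗[k] C) :=
  (TensorProduct.assoc k C C C).toLinearMap ∘ₗ rTensor C (rTensor C ψ ∘ₗ b) ∘ₗ a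
noncomputable def M9 (a b : C →ₗ[k] C ⊗[k] C) (ψ : C →ₗ[k] C) : C →ₗ[k] C ⊗[k] (C ⊗[k] C) :=
  lTensor C (lTensor C ψ ∘ₗ b) ∘ₗ a
noncomputable def M12 (a b : C →ₗ[k] C ⊗[k] C) (ψ : C →ₗ[k] C) : C →ₗ[k] C ⊗[k] (C ⊗[k] C) :=
  (TensorProduct.assoc k C C C).toLinearMap ∘ₗ rTensor C (lTensor C ψ ∘ₗ b) ∘ₗ a

lemma obstrIdJ (e f g : C →ₗ[k] C ⊗[k] C) :
    (LinearMap.lTensor C (TensorProduct.assoc k C C C).toLinearMap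
        ∘ₗ (TensorProduct.assoc k C (C ⊗[k] C) C).toLinearMap)
        ∘ₗ rTensor C ((TensorProduct.assoc k C C C).toLinearMap ∘ₗ rTensor C e ∘ₗ f) ∘ₗ g
      = N2 e f g := by
  have h : (TensorProduct.assoc k C C (C ⊗[k] C)).toLinearMap
      ∘ₗ rTensor (C ⊗[k] C) e ∘ₗ (TensorProduct.assoc k C C C).toLinearMap
      = lTensor C (TensorProduct.assoc k C C C).toLinearMap
        ∘ₗ (TensorProduct.assoc k C (C ⊗[k] C) C).toLinearMap
        ∘ₗ rTensor C (TensorProduct.assoc k C C C).toLinearMap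
        ∘ₗ rTensor C (rTensor C e) := by
    rw [← obstrNat1]
    exact congrArg (· ∘ₗ rTensor C (rTensor C e)) obstrPent
  calc (LinearMap.lTensor C (TensorProduct.assoc k C C C).toLinearMap
        ∘ₗ (TensorProduct.assoc k C (C ⊗[k] C) C).toLinearMap)
        ∘ₗ rTensor C ((TensorProduct.assoc k C C C).toLinearMap ∘ₗ rTensor C e ∘ₗ f) ∘ₗ g
      = (lTensor C (TensorProduct.assoc k C C C).toLinearMap
        ∘ₗ (TensorProduct.assoc k C (C ⊗[k] C) C).toLinearMap
        ∘ₗ rTensor C (TensorProduct.assoc k C C C).toLinearMap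
        ∘ₗ rTensor C (rTensor C e)) ∘ₗ rTensor C f ∘ₗ g := by
        rw [rTensor_comp, rTensor_comp]; rfl
    _ = N2 e f g := by rw [← h]; rfl

lemma obstrIdC (e f g : C →ₗ[k] C ⊗[k] C) :
    (LinearMap.lTensor C (TensorProduct.assoc k C C C).toLinearMap
        ∘ₗ (TensorProduct.assoc k C (C ⊗[k] C) C).toLinearMap)
        ∘ₗ rTensor C (lTensor C e ∘ₗ f) ∘ₗ g
      = N3 e f g := by
  have h : (TensorProduct.assoc k C (C ⊗[k] C) C).toLinearMap ∘ₗ rTensor C (lTensor C e)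
      = lTensor C (rTensor C e) ∘ₗ (TensorProduct.assoc k C C C).toLinearMap := obstrNat2 e
  calc (LinearMap.lTensor C (TensorProduct.assoc k C C C).toLinearMap
        ∘ₗ (TensorProduct.assoc k C (C ⊗[k] C) C).toLinearMap)
        ∘ₗ rTensor C (lTensor C e ∘ₗ f) ∘ₗ g
      = lTensor C (TensorProduct.assoc k C C C).toLinearMap
        ∘ₗ ((TensorProduct.assoc k C (C ⊗[k] C) C).toLinearMap ∘ₗ rTensor C (lTensor C e))
        ∘ₗ rTensor C f ∘ₗ g := by rw [rTensor_comp]; rfl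
    _ = lTensor C (TensorProduct.assoc k C C C).toLinearMap
        ∘ₗ (lTensor C (rTensor C e) ∘ₗ (TensorProduct.assoc k C C C).toLinearMap)
        ∘ₗ rTensor C f ∘ₗ g := by rw [h]
    _ = N3 e f g := by
        show (lTensor C (TensorProduct.assoc k C C C).toLinearMap ∘ₗ lTensor C (rTensor C e))
          ∘ₗ (TensorProduct.assoc k C C C).toLinearMap ∘ₗ rTensor C f ∘ₗ g = N3 e f g
        rw [← lTensor_comp]
        rfl

lemma obstrIdD (e f g : C →ₗ[k] C ⊗[k] C) :
    (TensorProduct.assoc k C C (C ⊗[k] C)).toLinearMap ∘ₗ rTensor (C ⊗[k] C) e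
        ∘ₗ lTensor C f ∘ₗ g
      = N4 f e g := by
  have h1 : rTensor (C ⊗[k] C) e ∘ₗ lTensor C f
      = lTensor (C ⊗[k] C) f ∘ₗ rTensor C e := by
    rw [rTensor_comp_lTensor, lTensor_comp_rTensor]
  calc (TensorProduct.assoc k C C (C ⊗[k] C)).toLinearMap ∘ₗ rTensor (C ⊗[k] C) e
        ∘ₗ lTensor C f ∘ₗ g
      = ((TensorProduct.assoc k C C (C ⊗[k] C)).toLinearMap ∘ₗ lTensor (C ⊗[k] C) f)
          ∘ₗ rTensor C e ∘ₗ g := by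
        show (TensorProduct.assoc k C C (C ⊗[k] C)).toLinearMap
          ∘ₗ (rTensor (C ⊗[k] C) e ∘ₗ lTensor C f) ∘ₗ g = _
        rw [h1]; rfl
    _ = N4 f e g := by rw [obstrNat3]; rfl

lemma obstrIdA (e f g : C →ₗ[k] C ⊗[k] C) :
    lTensor C ((TensorProduct.assoc k C C C).toLinearMap ∘ₗ rTensor C e)
        ∘ₗ lTensor C f ∘ₗ g = N1 g e f := by
  show (lTensor C ((TensorProduct.assoc k C C C).toLinearMap ∘ₗ rTensor C e)
        ∘ₗ lTensor C f) ∘ₗ g = N1 g e f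
  rw [← lTensor_comp]
  rfl

lemma obstrIdB (e f g : C →ₗ[k] C ⊗[k] C) :
    lTensor C (lTensor C e) ∘ₗ lTensor C f ∘ₗ g = N6 g e f := by
  show (lTensor C (lTensor C e) ∘ₗ lTensor C f) ∘ₗ g = N6 g e f
  rw [← lTensor_comp]
  rfl

set_option maxHeartbeats 1000000 in
lemma obstrHexp (e f g : C →ₗ[k] C ⊗[k] C) :
    delta3 e (Qc f g)
      = ((N1 e f g - N1 g e f) - (N2 e f g - N2 f g e)) + (N3 e f g - N3 f g e)
          - (N4 e f g - N4 f e g) - (N6 e f g - N6 g e f) := by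
  have h1 := obstrIdJ f g e
  have h2 := obstrIdC f g e
  have h3 := obstrIdD e f g
  have h4 := obstrIdA e f g
  have h5 := obstrIdB e f g
  have e1 := fun x => LinearMap.congr_fun h1 x
  have e2 := fun x => LinearMap.congr_fun h2 x
  have e3 := fun x => LinearMap.congr_fun h3 x
  have e4 := fun x => LinearMap.congr_fun h4 x
  have e5 := fun x => LinearMap.congr_fun h5 x
  have sa2 : ∀ (A B : C ⊗[k] C →ₗ[k] (C ⊗[k] (C ⊗[k] C)) ⊗[k] C) (u : C ⊗[k] C),
      (A - B) u = A u - B u := fun _ _ _ => rfl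
  have sa1 : ∀ (A B : C ⊗[k] C →ₗ[k] C ⊗[k] (C ⊗[k] (C ⊗[k] C))) (u : C ⊗[k] C),
      (A - B) u = A u - B u := fun _ _ _ => rfl
  ext x
  show (delta3 e (Qc f g)) x = _
  have lhs : (delta3 e (Qc f g)) x
      = (lTensor C (Qc f g) ∘ₗ e) x
        - ((TensorProduct.assoc k C C (C ⊗[k] C)).toLinearMap
            ∘ₗ LinearMap.rTensor (C ⊗[k] C) e ∘ₗ (Qc f g)) x
        + (LinearMap.lTensor C
            ((TensorProduct.assoc k C C C).toLinearMap ∘ₗ LinearMap.rTensor C e) ∘ₗ (Qc f g)) x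
        - (LinearMap.lTensor C (LinearMap.lTensor C e) ∘ₗ (Qc f g)) x
        + ((LinearMap.lTensor C (TensorProduct.assoc k C C C).toLinearMap
            ∘ₗ (TensorProduct.assoc k C (C ⊗[k] C) C).toLinearMap)
            ∘ₗ LinearMap.rTensor C (Qc f g) ∘ₗ e) x := rfl
  rw [lhs]
  simp only [Qc, comp_apply, lTensor_sub, rTensor_sub, LinearMap.sub_apply, sa1, sa2, map_sub] at *
  simp only [e1, e2, e3, e4, e5]
  have rhs : (((N1 e f g - N1 g e f) - (N2 e f g - N2 f g e)) + (N3 e f g - N3 f g e)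
          - (N4 e f g - N4 f e g) - (N6 e f g - N6 g e f)) x
      = (N1 e f g) x - (N1 g e f) x - ((N2 e f g) x - (N2 f g e) x) + ((N3 e f g) x - (N3 f g e) x)
          - ((N4 e f g) x - (N4 f e g) x) - ((N6 e f g) x - (N6 g e f) x) := rfl
  refine Eq.trans ?_ rhs.symm
  simp only [N1, N2, N3, N4, N6, comp_apply]
  abel

set_option maxHeartbeats 1000000 in
lemma obstrHexp2 (a b : C →ₗ[k] C ⊗[k] C) (ψ : C →ₗ[k] C) :
    delta2 a (Bc b ψ) - omega3 ψ (Qc a b)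
      = ((M1 a b ψ - M1 b a ψ) - (M4 a b ψ - M4 b a ψ)) - (M5 a b ψ - M5 b a ψ)
          + (M8 a b ψ - M8 b a ψ) - (M9 a b ψ - M9 b a ψ) + (M12 a b ψ - M12 b a ψ) := by
  have A1 : ∀ v : (C ⊗[k] C) ⊗[k] C,
      (rTensor (C ⊗[k] C) ψ) ((TensorProduct.assoc k C C C).toLinearMap v)
        = (TensorProduct.assoc k C C C).toLinearMap ((rTensor C (rTensor C ψ)) v) :=
    fun v => (LinearMap.congr_fun (obstrNat1' ψ) v).symm
  have A2 : ∀ v : (C ⊗[k] C) ⊗[k] C,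
      (lTensor C (rTensor C ψ)) ((TensorProduct.assoc k C C C).toLinearMap v)
        = (TensorProduct.assoc k C C C).toLinearMap ((rTensor C (lTensor C ψ)) v) :=
    fun v => (LinearMap.congr_fun (obstrNat2' ψ) v).symm
  have A3 : ∀ v : (C ⊗[k] C) ⊗[k] C,
      (lTensor C (lTensor C ψ)) ((TensorProduct.assoc k C C C).toLinearMap v)
        = (TensorProduct.assoc k C C C).toLinearMap ((lTensor (C ⊗[k] C) ψ) v) :=
    fun v => (LinearMap.congr_fun (obstrNat3' ψ) v).symm
  have Comm1 : ∀ (h : C →ₗ[k] C ⊗[k] C) (u : C ⊗[k] C),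
      (lTensor (C ⊗[k] C) ψ) ((rTensor C h) u) = (rTensor C h) ((lTensor C ψ) u) := by
    intro h u
    have : lTensor (C ⊗[k] C) ψ ∘ₗ rTensor C h = rTensor C h ∘ₗ lTensor C ψ := by
      rw [lTensor_comp_rTensor, rTensor_comp_lTensor]
    exact LinearMap.congr_fun this u
  have Comm2 : ∀ (h : C →ₗ[k] C ⊗[k] C) (u : C ⊗[k] C),
      (rTensor (C ⊗[k] C) ψ) ((lTensor C h) u) = (lTensor C h) ((rTensor C ψ) u) := by
    intro h u
    have : rTensor (C ⊗[k] C) ψ ∘ₗ lTensor C h = lTensor C h ∘ₗ rTensor C ψ := by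
      rw [rTensor_comp_lTensor, lTensor_comp_rTensor]
    exact LinearMap.congr_fun this u
  have Mr1 : ∀ (h : C →ₗ[k] C ⊗[k] C) (h' : C →ₗ[k] C) (u : C ⊗[k] C),
      (rTensor C h) ((rTensor C h') u) = (rTensor C (h ∘ₗ h')) u := by
    intro h h' u; rw [rTensor_comp]; rfl
  have Ml1 : ∀ (h : C →ₗ[k] C ⊗[k] C) (h' : C →ₗ[k] C) (u : C ⊗[k] C),
      (lTensor C h) ((lTensor C h') u) = (lTensor C (h ∘ₗ h')) u := by
    intro h h' u; rw [lTensor_comp]; rfl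
  have Mr2 : ∀ (h : C ⊗[k] C →ₗ[k] C ⊗[k] C) (h' : C →ₗ[k] C ⊗[k] C) (u : C ⊗[k] C),
      (rTensor C h) ((rTensor C h') u) = (rTensor C (h ∘ₗ h')) u := by
    intro h h' u; rw [rTensor_comp]; rfl
  have Ml2 : ∀ (h : C ⊗[k] C →ₗ[k] C ⊗[k] C) (h' : C →ₗ[k] C ⊗[k] C) (u : C ⊗[k] C),
      (lTensor C h) ((lTensor C h') u) = (lTensor C (h ∘ₗ h')) u := by
    intro h h' u; rw [lTensor_comp]; rfl
  ext x
  simp only [delta2, omega3, Bc, Qc, M1, M4, M5, M8, M9, M12, LinearMap.sub_apply, LinearMap.add_apply,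
    comp_apply, lTensor_sub, rTensor_sub, map_sub, A1, A2, A3, Comm1, Comm2, Mr1, Ml1, Mr2, Ml2]
  abel

lemma delta3_zero (e : C →ₗ[k] C ⊗[k] C) : delta3 e (0 : C →ₗ[k] C ⊗[k] (C ⊗[k] C)) = 0 := by
  simp only [delta3, lTensor_zero, rTensor_zero, zero_comp, comp_zero]
  abel

lemma delta3_add (e : C →ₗ[k] C ⊗[k] C) (F G : C →ₗ[k] C ⊗[k] (C ⊗[k] C)) :
    delta3 e (F + G) = delta3 e F + delta3 e G := by
  simp only [delta3, lTensor_add, rTensor_add, add_comp, comp_add]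
  abel

lemma delta3_sum (e : C →ₗ[k] C ⊗[k] C) {ι : Type*} (s : Finset ι)
    (F : ι → (C →ₗ[k] C ⊗[k] (C ⊗[k] C))) :
    delta3 e (∑ i ∈ s, F i) = ∑ i ∈ s, delta3 e (F i) :=
  map_sum (AddMonoidHom.mk' (delta3 e) (delta3_add e)) F s

lemma delta2_zero (e : C →ₗ[k] C ⊗[k] C) : delta2 e (0 : C →ₗ[k] C ⊗[k] C) = 0 := by
  simp only [delta2, lTensor_zero, rTensor_zero, zero_comp, comp_zero]
  abel

lemma delta2_add (e : C →ₗ[k] C ⊗[k] C) (F G : C →ₗ[k] C ⊗[k] C) :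
    delta2 e (F + G) = delta2 e F + delta2 e G := by
  simp only [delta2, lTensor_add, rTensor_add, add_comp, comp_add]
  abel

lemma delta2_sum (e : C →ₗ[k] C ⊗[k] C) {ι : Type*} (s : Finset ι)
    (F : ι → (C →ₗ[k] C ⊗[k] C)) :
    delta2 e (∑ i ∈ s, F i) = ∑ i ∈ s, delta2 e (F i) :=
  map_sum (AddMonoidHom.mk' (delta2 e) (delta2_add e)) F s

lemma omega3_zero (ψ : C →ₗ[k] C) : omega3 ψ (0 : C →ₗ[k] C ⊗[k] (C ⊗[k] C)) = 0 := by
  simp only [omega3, comp_zero, zero_comp]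
  abel

lemma omega3_add (ψ : C →ₗ[k] C) (F G : C →ₗ[k] C ⊗[k] (C ⊗[k] C)) :
    omega3 ψ (F + G) = omega3 ψ F + omega3 ψ G := by
  simp only [omega3, comp_add, add_comp]
  abel

lemma omega3_sum (ψ : C →ₗ[k] C) {ι : Type*} (s : Finset ι)
    (F : ι → (C →ₗ[k] C ⊗[k] (C ⊗[k] C))) :
    omega3 ψ (∑ i ∈ s, F i) = ∑ i ∈ s, omega3 ψ (F i) :=
  map_sum (AddMonoidHom.mk' (omega3 ψ) (omega3_add ψ)) F s

lemma obstrL3 (D : ℕ → (C →ₗ[k] C ⊗[k] C)) (m : ℕ) :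
    ∑ p ∈ Finset.HasAntidiagonal.antidiagonal m, ∑ q ∈ Finset.HasAntidiagonal.antidiagonal p.2,
        delta3 (D p.1) (Qc (D q.1) (D q.2)) = 0 := by
  have R1 : ∑ p ∈ Finset.HasAntidiagonal.antidiagonal m, ∑ q ∈ Finset.HasAntidiagonal.antidiagonal p.2,
        N1 (D p.1) (D q.1) (D q.2)
      = ∑ p ∈ Finset.HasAntidiagonal.antidiagonal m, ∑ q ∈ Finset.HasAntidiagonal.antidiagonal p.2,
        N1 (D q.2) (D p.1) (D q.1) :=
    ObstrSum.rotR m (fun a b c => N1 (D a) (D b) (D c))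
  have R2 : ∑ p ∈ Finset.HasAntidiagonal.antidiagonal m, ∑ q ∈ Finset.HasAntidiagonal.antidiagonal p.2,
        N2 (D p.1) (D q.1) (D q.2)
      = ∑ p ∈ Finset.HasAntidiagonal.antidiagonal m, ∑ q ∈ Finset.HasAntidiagonal.antidiagonal p.2,
        N2 (D q.1) (D q.2) (D p.1) :=
    ObstrSum.rotL m (fun a b c => N2 (D a) (D b) (D c))
  have R3 : ∑ p ∈ Finset.HasAntidiagonal.antidiagonal m, ∑ q ∈ Finset.HasAntidiagonal.antidiagonal p.2,
        N3 (D p.1) (D q.1) (D q.2)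
      = ∑ p ∈ Finset.HasAntidiagonal.antidiagonal m, ∑ q ∈ Finset.HasAntidiagonal.antidiagonal p.2,
        N3 (D q.1) (D q.2) (D p.1) :=
    ObstrSum.rotL m (fun a b c => N3 (D a) (D b) (D c))
  have R4 : ∑ p ∈ Finset.HasAntidiagonal.antidiagonal m, ∑ q ∈ Finset.HasAntidiagonal.antidiagonal p.2,
        N4 (D p.1) (D q.1) (D q.2)
      = ∑ p ∈ Finset.HasAntidiagonal.antidiagonal m, ∑ q ∈ Finset.HasAntidiagonal.antidiagonal p.2,
        N4 (D q.1) (D p.1) (D q.2) :=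
    ObstrSum.swap12 m (fun a b c => N4 (D a) (D b) (D c))
  have R5 : ∑ p ∈ Finset.HasAntidiagonal.antidiagonal m, ∑ q ∈ Finset.HasAntidiagonal.antidiagonal p.2,
        N6 (D p.1) (D q.1) (D q.2)
      = ∑ p ∈ Finset.HasAntidiagonal.antidiagonal m, ∑ q ∈ Finset.HasAntidiagonal.antidiagonal p.2,
        N6 (D q.2) (D p.1) (D q.1) :=
    ObstrSum.rotR m (fun a b c => N6 (D a) (D b) (D c))
  calc ∑ p ∈ Finset.HasAntidiagonal.antidiagonal m, ∑ q ∈ Finset.HasAntidiagonal.antidiagonal p.2,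
        delta3 (D p.1) (Qc (D q.1) (D q.2))
      = ∑ p ∈ Finset.HasAntidiagonal.antidiagonal m, ∑ q ∈ Finset.HasAntidiagonal.antidiagonal p.2,
          (((N1 (D p.1) (D q.1) (D q.2) - N1 (D q.2) (D p.1) (D q.1))
            - (N2 (D p.1) (D q.1) (D q.2) - N2 (D q.1) (D q.2) (D p.1)))
            + (N3 (D p.1) (D q.1) (D q.2) - N3 (D q.1) (D q.2) (D p.1))
            - (N4 (D p.1) (D q.1) (D q.2) - N4 (D q.1) (D p.1) (D q.2))
            - (N6 (D p.1) (D q.1) (D q.2) - N6 (D q.2) (D p.1) (D q.1))) :=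
        Finset.sum_congr rfl fun p _ => Finset.sum_congr rfl fun q _ =>
          obstrHexp (D p.1) (D q.1) (D q.2)
    _ = 0 := by
        simp only [Finset.sum_sub_distrib, Finset.sum_add_distrib]
        rw [← R1, ← R2, ← R3, ← R4, ← R5]
        simp only [sub_self, add_zero, zero_add, sub_zero, zero_sub, neg_zero]

lemma obstrL2 (D : ℕ → (C →ₗ[k] C ⊗[k] C)) (Ψ : ℕ → (C →ₗ[k] C)) (m : ℕ) :
    ∑ p ∈ Finset.HasAntidiagonal.antidiagonal m, ∑ q ∈ Finset.HasAntidiagonal.antidiagonal p.2,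
        (delta2 (D p.1) (Bc (D q.1) (Ψ q.2)) - omega3 (Ψ q.2) (Qc (D p.1) (D q.1))) = 0 := by
  have R1 : ∑ p ∈ Finset.HasAntidiagonal.antidiagonal m, ∑ q ∈ Finset.HasAntidiagonal.antidiagonal p.2,
        M1 (D p.1) (D q.1) (Ψ q.2)
      = ∑ p ∈ Finset.HasAntidiagonal.antidiagonal m, ∑ q ∈ Finset.HasAntidiagonal.antidiagonal p.2,
        M1 (D q.1) (D p.1) (Ψ q.2) :=
    ObstrSum.swap12 m (fun a b c => M1 (D a) (D b) (Ψ c))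
  have R4 : ∑ p ∈ Finset.HasAntidiagonal.antidiagonal m, ∑ q ∈ Finset.HasAntidiagonal.antidiagonal p.2,
        M4 (D p.1) (D q.1) (Ψ q.2)
      = ∑ p ∈ Finset.HasAntidiagonal.antidiagonal m, ∑ q ∈ Finset.HasAntidiagonal.antidiagonal p.2,
        M4 (D q.1) (D p.1) (Ψ q.2) :=
    ObstrSum.swap12 m (fun a b c => M4 (D a) (D b) (Ψ c))
  have R5 : ∑ p ∈ Finset.HasAntidiagonal.antidiagonal m, ∑ q ∈ Finset.HasAntidiagonal.antidiagonal p.2,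
        M5 (D p.1) (D q.1) (Ψ q.2)
      = ∑ p ∈ Finset.HasAntidiagonal.antidiagonal m, ∑ q ∈ Finset.HasAntidiagonal.antidiagonal p.2,
        M5 (D q.1) (D p.1) (Ψ q.2) :=
    ObstrSum.swap12 m (fun a b c => M5 (D a) (D b) (Ψ c))
  have R8 : ∑ p ∈ Finset.HasAntidiagonal.antidiagonal m, ∑ q ∈ Finset.HasAntidiagonal.antidiagonal p.2,
        M8 (D p.1) (D q.1) (Ψ q.2)
      = ∑ p ∈ Finset.HasAntidiagonal.antidiagonal m, ∑ q ∈ Finset.HasAntidiagonal.antidiagonal p.2,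
        M8 (D q.1) (D p.1) (Ψ q.2) :=
    ObstrSum.swap12 m (fun a b c => M8 (D a) (D b) (Ψ c))
  have R9 : ∑ p ∈ Finset.HasAntidiagonal.antidiagonal m, ∑ q ∈ Finset.HasAntidiagonal.antidiagonal p.2,
        M9 (D p.1) (D q.1) (Ψ q.2)
      = ∑ p ∈ Finset.HasAntidiagonal.antidiagonal m, ∑ q ∈ Finset.HasAntidiagonal.antidiagonal p.2,
        M9 (D q.1) (D p.1) (Ψ q.2) :=
    ObstrSum.swap12 m (fun a b c => M9 (D a) (D b) (Ψ c))
  have R12 : ∑ p ∈ Finset.HasAntidiagonal.antidiagonal m, ∑ q ∈ Finset.HasAntidiagonal.antidiagonal p.2,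
        M12 (D p.1) (D q.1) (Ψ q.2)
      = ∑ p ∈ Finset.HasAntidiagonal.antidiagonal m, ∑ q ∈ Finset.HasAntidiagonal.antidiagonal p.2,
        M12 (D q.1) (D p.1) (Ψ q.2) :=
    ObstrSum.swap12 m (fun a b c => M12 (D a) (D b) (Ψ c))
  calc ∑ p ∈ Finset.HasAntidiagonal.antidiagonal m, ∑ q ∈ Finset.HasAntidiagonal.antidiagonal p.2,
        (delta2 (D p.1) (Bc (D q.1) (Ψ q.2)) - omega3 (Ψ q.2) (Qc (D p.1) (D q.1)))
      = ∑ p ∈ Finset.HasAntidiagonal.antidiagonal m, ∑ q ∈ Finset.HasAntidiagonal.antidiagonal p.2,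
          (((M1 (D p.1) (D q.1) (Ψ q.2) - M1 (D q.1) (D p.1) (Ψ q.2))
            - (M4 (D p.1) (D q.1) (Ψ q.2) - M4 (D q.1) (D p.1) (Ψ q.2)))
            - (M5 (D p.1) (D q.1) (Ψ q.2) - M5 (D q.1) (D p.1) (Ψ q.2))
            + (M8 (D p.1) (D q.1) (Ψ q.2) - M8 (D q.1) (D p.1) (Ψ q.2))
            - (M9 (D p.1) (D q.1) (Ψ q.2) - M9 (D q.1) (D p.1) (Ψ q.2))
            + (M12 (D p.1) (D q.1) (Ψ q.2) - M12 (D q.1) (D p.1) (Ψ q.2))) :=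
        Finset.sum_congr rfl fun p _ => Finset.sum_congr rfl fun q _ =>
          obstrHexp2 (D p.1) (D q.1) (Ψ q.2)
    _ = 0 := by
        simp only [Finset.sum_sub_distrib, Finset.sum_add_distrib]
        rw [← R1, ← R4, ← R5, ← R8, ← R9, ← R12]
        simp only [sub_self, add_zero, zero_add, sub_zero, zero_sub, neg_zero]

end ObstructionAux


/-- For a deformation of order `n` of a Coder pair `(C, ψ_C)`, the obstruction
`(Ob_C, Ob_ψ)` is a 3-cocycle of the Coder-pair complex with coefficients in the
coadjoint bicomodule: `δ_c(Ob_C) = 0` and `δ_c(Ob_ψ) − ω(Ob_C) = 0`. -/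
theorem obstruction_is_three_cocycle [CharZero k]
    (Δ : C →ₗ[k] C ⊗[k] C)
    (hΔ : (TensorProduct.assoc k C C C).toLinearMap ∘ₗ LinearMap.rTensor C Δ ∘ₗ Δ
        = LinearMap.lTensor C Δ ∘ₗ Δ)
    (ψC : C →ₗ[k] C)
    (hψC : Δ ∘ₗ ψC = LinearMap.rTensor C ψC ∘ₗ Δ + LinearMap.lTensor C ψC ∘ₗ Δ)
    (n : ℕ) (Δs : ℕ → (C →ₗ[k] C ⊗[k] C)) (ψs : ℕ → (C →ₗ[k] C))
    (hdef : IsDeformationOfOrder n Δ ψC Δs ψs) :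
    delta3 Δ (obC n Δs) = 0
      ∧ delta2 Δ (obPsi n Δs ψs) - omega3 ψC (obC n Δs) = 0 := by
  obtain ⟨h0, hp0, h3, h4⟩ := hdef
  set D : ℕ → (C →ₗ[k] C ⊗[k] C) := fun i => if i ≤ n then Δs i else 0 with hDdef
  set Ψ : ℕ → (C →ₗ[k] C) := fun i => if i ≤ n then ψs i else 0 with hΨdef
  have hDle : ∀ i, i ≤ n → D i = Δs i := fun i hi => by simp [hDdef, hi]
  have hΨle : ∀ i, i ≤ n → Ψ i = ψs i := fun i hi => by simp [hΨdef, hi]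
  have hDtop : D (n + 1) = 0 := by simp [hDdef]
  have hΨtop : Ψ (n + 1) = 0 := by simp [hΨdef]
  have hD0 : D 0 = Δ := by rw [hDle 0 (Nat.zero_le n), h0]
  have hΨ0 : Ψ 0 = ψC := by rw [hΨle 0 (Nat.zero_le n), hp0]
  -- the truncated first-order sums vanish up to order n
  have hA0 : ∀ s : ℕ, s ≤ n →
      (∑ q ∈ Finset.HasAntidiagonal.antidiagonal s, Qc (D q.1) (D q.2)) = 0 := by
    intro s hs
    have step : ∀ q ∈ Finset.HasAntidiagonal.antidiagonal s, Qc (D q.1) (D q.2)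
        = (TensorProduct.assoc k C C C).toLinearMap ∘ₗ LinearMap.rTensor C (Δs q.1) ∘ₗ Δs q.2
          - LinearMap.lTensor C (Δs q.1) ∘ₗ Δs q.2 := by
      intro q hq
      have hq' := Finset.HasAntidiagonal.mem_antidiagonal.mp hq
      rw [Qc, hDle q.1 (by omega), hDle q.2 (by omega)]
    rw [Finset.sum_congr rfl step, Finset.sum_sub_distrib, ← h3 s hs, sub_self]
  have hB0 : ∀ s : ℕ, s ≤ n →
      (∑ q ∈ Finset.HasAntidiagonal.antidiagonal s, Bc (D q.1) (Ψ q.2)) = 0 := by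
    intro s hs
    have step : ∀ q ∈ Finset.HasAntidiagonal.antidiagonal s, Bc (D q.1) (Ψ q.2)
        = Δs q.1 ∘ₗ ψs q.2 - LinearMap.rTensor C (ψs q.2) ∘ₗ Δs q.1
          - LinearMap.lTensor C (ψs q.2) ∘ₗ Δs q.1 := by
      intro q hq
      have hq' := Finset.HasAntidiagonal.mem_antidiagonal.mp hq
      rw [Bc, hDle q.1 (by omega), hΨle q.2 (by omega)]
    rw [Finset.sum_congr rfl step]
    simp only [Finset.sum_sub_distrib]
    have sw1 : ∑ q ∈ Finset.HasAntidiagonal.antidiagonal s, LinearMap.rTensor C (ψs q.2) ∘ₗ Δs q.1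
        = ∑ q ∈ Finset.HasAntidiagonal.antidiagonal s, LinearMap.rTensor C (ψs q.1) ∘ₗ Δs q.2 :=
      ObstrSum.antidiagonal_swap' s (fun q => LinearMap.rTensor C (ψs q.2) ∘ₗ Δs q.1)
    have sw2 : ∑ q ∈ Finset.HasAntidiagonal.antidiagonal s, LinearMap.lTensor C (ψs q.2) ∘ₗ Δs q.1
        = ∑ q ∈ Finset.HasAntidiagonal.antidiagonal s, LinearMap.lTensor C (ψs q.1) ∘ₗ Δs q.2 :=
      ObstrSum.antidiagonal_swap' s (fun q => LinearMap.lTensor C (ψs q.2) ∘ₗ Δs q.1)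
    rw [sw1, sw2, h4 s hs, Finset.sum_add_distrib]
    abel
  -- identification of the obstructions with the full (truncated) sums at order n+1
  have hobC : (∑ q ∈ Finset.HasAntidiagonal.antidiagonal (n + 1), Qc (D q.1) (D q.2)) = obC n Δs := by
    have hcond : ∀ q ∈ Finset.HasAntidiagonal.antidiagonal (n + 1),
        Qc (D q.1) (D q.2) ≠ 0 → (0 < q.1 ∧ 0 < q.2) := by
      intro q hq hne
      have hq' := Finset.HasAntidiagonal.mem_antidiagonal.mp hq
      by_contra hc
      apply hne
      rcases Nat.eq_zero_or_pos q.1 with h1 | h1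
      · have h2 : q.2 = n + 1 := by omega
        rw [h2, hDtop]
        simp [Qc]
      rcases Nat.eq_zero_or_pos q.2 with h2 | h2
      · have h1' : q.1 = n + 1 := by omega
        rw [h1', hDtop]
        simp [Qc]
      exact absurd ⟨h1, h2⟩ hc
    have hfil : ∑ q ∈ (Finset.HasAntidiagonal.antidiagonal (n + 1)).filter (fun p => 0 < p.1 ∧ 0 < p.2),
          Qc (D q.1) (D q.2)
        = ∑ q ∈ Finset.HasAntidiagonal.antidiagonal (n + 1), Qc (D q.1) (D q.2) :=
      Finset.sum_filter_of_ne hcond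
    rw [obC, ← hfil]
    refine Finset.sum_congr rfl fun q hq => ?_
    rw [Finset.mem_filter, Finset.HasAntidiagonal.mem_antidiagonal] at hq
    rw [Qc, hDle q.1 (by omega), hDle q.2 (by omega)]
  have hobP : (∑ q ∈ Finset.HasAntidiagonal.antidiagonal (n + 1), Bc (D q.1) (Ψ q.2)) = obPsi n Δs ψs := by
    have sw1 : ∑ q ∈ Finset.HasAntidiagonal.antidiagonal (n + 1), LinearMap.rTensor C (Ψ q.2) ∘ₗ D q.1
        = ∑ q ∈ Finset.HasAntidiagonal.antidiagonal (n + 1), LinearMap.rTensor C (Ψ q.1) ∘ₗ D q.2 :=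
      ObstrSum.antidiagonal_swap' (n + 1) (fun q => LinearMap.rTensor C (Ψ q.2) ∘ₗ D q.1)
    have sw2 : ∑ q ∈ Finset.HasAntidiagonal.antidiagonal (n + 1), LinearMap.lTensor C (Ψ q.2) ∘ₗ D q.1
        = ∑ q ∈ Finset.HasAntidiagonal.antidiagonal (n + 1), LinearMap.lTensor C (Ψ q.1) ∘ₗ D q.2 :=
      ObstrSum.antidiagonal_swap' (n + 1) (fun q => LinearMap.lTensor C (Ψ q.2) ∘ₗ D q.1)
    have step1 : (∑ q ∈ Finset.HasAntidiagonal.antidiagonal (n + 1), Bc (D q.1) (Ψ q.2))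
        = ∑ q ∈ Finset.HasAntidiagonal.antidiagonal (n + 1),
            (D q.1 ∘ₗ Ψ q.2 - LinearMap.lTensor C (Ψ q.1) ∘ₗ D q.2
              - LinearMap.rTensor C (Ψ q.1) ∘ₗ D q.2) := by
      simp only [Bc, Finset.sum_sub_distrib]
      rw [sw1, sw2]
      abel
    have hcond : ∀ q ∈ Finset.HasAntidiagonal.antidiagonal (n + 1),
        (D q.1 ∘ₗ Ψ q.2 - LinearMap.lTensor C (Ψ q.1) ∘ₗ D q.2
          - LinearMap.rTensor C (Ψ q.1) ∘ₗ D q.2) ≠ 0 → (0 < q.1 ∧ 0 < q.2) := by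
      intro q hq hne
      have hq' := Finset.HasAntidiagonal.mem_antidiagonal.mp hq
      by_contra hc
      apply hne
      rcases Nat.eq_zero_or_pos q.1 with h1 | h1
      · have h2 : q.2 = n + 1 := by omega
        rw [h1, h2, hDtop, hΨtop]
        simp
      rcases Nat.eq_zero_or_pos q.2 with h2 | h2
      · have h1' : q.1 = n + 1 := by omega
        rw [h1', h2, hDtop, hΨtop]
        simp
      exact absurd ⟨h1, h2⟩ hc
    have hfil : ∑ q ∈ (Finset.HasAntidiagonal.antidiagonal (n + 1)).filter (fun p => 0 < p.1 ∧ 0 < p.2),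
          (D q.1 ∘ₗ Ψ q.2 - LinearMap.lTensor C (Ψ q.1) ∘ₗ D q.2
            - LinearMap.rTensor C (Ψ q.1) ∘ₗ D q.2)
        = ∑ q ∈ Finset.HasAntidiagonal.antidiagonal (n + 1),
            (D q.1 ∘ₗ Ψ q.2 - LinearMap.lTensor C (Ψ q.1) ∘ₗ D q.2
              - LinearMap.rTensor C (Ψ q.1) ∘ₗ D q.2) :=
      Finset.sum_filter_of_ne hcond
    rw [step1, obPsi, ← hfil]
    refine Finset.sum_congr rfl fun q hq => ?_
    rw [Finset.mem_filter, Finset.HasAntidiagonal.mem_antidiagonal] at hq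
    rw [hDle q.2 (by omega), hΨle q.1 (by omega), hDle q.1 (by omega), hΨle q.2 (by omega)]
  constructor
  · -- first cocycle condition
    have key := obstrL3 D (n + 1)
    have key' : ∑ p ∈ Finset.HasAntidiagonal.antidiagonal (n + 1),
        delta3 (D p.1) (∑ q ∈ Finset.HasAntidiagonal.antidiagonal p.2, Qc (D q.1) (D q.2)) = 0 := by
      rw [Finset.sum_congr rfl
        (fun p _ => delta3_sum (D p.1) (Finset.HasAntidiagonal.antidiagonal p.2)
          (fun q => Qc (D q.1) (D q.2)))]
      exact key
    have hsingle : ∑ p ∈ Finset.HasAntidiagonal.antidiagonal (n + 1),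
        delta3 (D p.1) (∑ q ∈ Finset.HasAntidiagonal.antidiagonal p.2, Qc (D q.1) (D q.2))
        = delta3 (D 0) (∑ q ∈ Finset.HasAntidiagonal.antidiagonal (n + 1), Qc (D q.1) (D q.2)) := by
      apply Finset.sum_eq_single_of_mem ((0 : ℕ), n + 1)
      · simp
      · intro b hb hne
        have hb' := Finset.HasAntidiagonal.mem_antidiagonal.mp hb
        have hb2 : b.2 ≤ n := by
          rcases Nat.eq_zero_or_pos b.1 with h | h
          · exact absurd (Prod.ext h (by omega)) hne
          · omega
        rw [hA0 b.2 hb2, delta3_zero]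
    rw [← hD0, ← hobC]
    exact (hsingle.symm.trans key')
  · -- second cocycle condition
    have key := obstrL2 D Ψ (n + 1)
    have split : (∑ p ∈ Finset.HasAntidiagonal.antidiagonal (n + 1), ∑ q ∈ Finset.HasAntidiagonal.antidiagonal p.2,
          delta2 (D p.1) (Bc (D q.1) (Ψ q.2)))
        - (∑ p ∈ Finset.HasAntidiagonal.antidiagonal (n + 1), ∑ q ∈ Finset.HasAntidiagonal.antidiagonal p.2,
          omega3 (Ψ q.2) (Qc (D p.1) (D q.1))) = 0 := by
      rw [← Finset.sum_sub_distrib]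
      refine Eq.trans (Finset.sum_congr rfl fun p _ => ?_) key
      exact (Finset.sum_sub_distrib _ _).symm
    have hrot : ∑ p ∈ Finset.HasAntidiagonal.antidiagonal (n + 1), ∑ q ∈ Finset.HasAntidiagonal.antidiagonal p.2,
          omega3 (Ψ q.2) (Qc (D p.1) (D q.1))
        = ∑ p ∈ Finset.HasAntidiagonal.antidiagonal (n + 1), ∑ q ∈ Finset.HasAntidiagonal.antidiagonal p.2,
          omega3 (Ψ p.1) (Qc (D q.1) (D q.2)) :=
      ObstrSum.rotL (n + 1) (fun a b c => omega3 (Ψ c) (Qc (D a) (D b)))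
    have hd : ∑ p ∈ Finset.HasAntidiagonal.antidiagonal (n + 1), ∑ q ∈ Finset.HasAntidiagonal.antidiagonal p.2,
          delta2 (D p.1) (Bc (D q.1) (Ψ q.2))
        = delta2 (D 0) (∑ q ∈ Finset.HasAntidiagonal.antidiagonal (n + 1), Bc (D q.1) (Ψ q.2)) := by
      rw [Finset.sum_congr rfl
        (fun p _ => (delta2_sum (D p.1) (Finset.HasAntidiagonal.antidiagonal p.2)
          (fun q => Bc (D q.1) (Ψ q.2))).symm)]
      apply Finset.sum_eq_single_of_mem ((0 : ℕ), n + 1)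
      · simp
      · intro b hb hne
        have hb' := Finset.HasAntidiagonal.mem_antidiagonal.mp hb
        have hb2 : b.2 ≤ n := by
          rcases Nat.eq_zero_or_pos b.1 with h | h
          · exact absurd (Prod.ext h (by omega)) hne
          · omega
        rw [hB0 b.2 hb2, delta2_zero]
    have ho : ∑ p ∈ Finset.HasAntidiagonal.antidiagonal (n + 1), ∑ q ∈ Finset.HasAntidiagonal.antidiagonal p.2,
          omega3 (Ψ p.1) (Qc (D q.1) (D q.2))
        = omega3 (Ψ 0) (∑ q ∈ Finset.HasAntidiagonal.antidiagonal (n + 1), Qc (D q.1) (D q.2)) := by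
      rw [Finset.sum_congr rfl
        (fun p _ => (omega3_sum (Ψ p.1) (Finset.HasAntidiagonal.antidiagonal p.2)
          (fun q => Qc (D q.1) (D q.2))).symm)]
      apply Finset.sum_eq_single_of_mem ((0 : ℕ), n + 1)
      · simp
      · intro b hb hne
        have hb' := Finset.HasAntidiagonal.mem_antidiagonal.mp hb
        have hb2 : b.2 ≤ n := by
          rcases Nat.eq_zero_or_pos b.1 with h | h
          · exact absurd (Prod.ext h (by omega)) hne
          · omega
        rw [hA0 b.2 hb2, omega3_zero]
    rw [hrot, hd, ho, hobP, hobC, hD0, hΨ0] at split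
    exact split
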